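/- Let B be a Hermitian matrix, u a unit vector, and s = u + τ(I - uu*)t be such that the Rayleigh quotient ρ(s) of s is minimal over span{u, (I - uu*)t}. With J := (I - uu*)(B - ρ(s)I)(I - uu*), one has ⟨J(u - s), u - s⟩ = ρ(u) - ρ(s). -/

import Mathlib

open Matrix
open scoped ComplexConjugate

/-- Squared Euclidean norm of a complex vector. -/
noncomputable def nsq {k : ℕ} (x : Fin k → ℂ) : ℝ := ∑ i, ‖x i‖ ^ 2

/-- Standard Hermitian inner product (conjugate-linear in the first argument). -/
noncomputable def cip {k : ℕ} (x y : Fin k → ℂ) : ℂ := ∑ i, conj (x i) * y i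

/-- Orthogonal projection `(I - yy*) v`. -/
noncomputable def proj {k : ℕ} (y v : Fin k → ℂ) : Fin k → ℂ := v - cip y v • y

/-- Rayleigh quotient of a vector with respect to a (Hermitian) matrix. -/
noncomputable def rq {k : ℕ} (B : Matrix (Fin k) (Fin k) ℂ) (x : Fin k → ℂ) : ℝ :=
  (cip (B.mulVec x) x).re / nsq x

lemma cip_add_left {k : ℕ} (x y z : Fin k → ℂ) : cip (x + y) z = cip x z + cip y z := by
  simp [cip, add_mul, Finset.sum_add_distrib]

lemma cip_add_right {k : ℕ} (x y z : Fin k → ℂ) : cip x (y + z) = cip x y + cip x z := by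
  simp [cip, mul_add, Finset.sum_add_distrib]

lemma cip_smul_left {k : ℕ} (c : ℂ) (x y : Fin k → ℂ) : cip (c • x) y = conj c * cip x y := by
  simp [cip, Finset.mul_sum, mul_assoc]

lemma cip_smul_right {k : ℕ} (c : ℂ) (x y : Fin k → ℂ) : cip x (c • y) = c * cip x y := by
  simp only [cip, Pi.smul_apply, smul_eq_mul, Finset.mul_sum]
  exact Finset.sum_congr rfl fun i _ => by ring

lemma cip_neg_left {k : ℕ} (x y : Fin k → ℂ) : cip (-x) y = -cip x y := by
  simp [cip, Finset.sum_neg_distrib]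

lemma cip_neg_right {k : ℕ} (x y : Fin k → ℂ) : cip x (-y) = -cip x y := by
  simp [cip, Finset.sum_neg_distrib]

lemma cip_sub_left {k : ℕ} (x y z : Fin k → ℂ) : cip (x - y) z = cip x z - cip y z := by
  simp [cip, sub_mul, Finset.sum_sub_distrib]

lemma cip_sub_right {k : ℕ} (x y z : Fin k → ℂ) : cip x (y - z) = cip x y - cip x z := by
  simp [cip, mul_sub, Finset.sum_sub_distrib]

lemma cip_conj {k : ℕ} (x y : Fin k → ℂ) : conj (cip x y) = cip y x := by
  simp [cip]; exact Finset.sum_congr rfl fun i _ => by ring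

lemma cip_self {k : ℕ} (x : Fin k → ℂ) : cip x x = (nsq x : ℂ) := by
  simp only [cip, nsq, Complex.ofReal_sum]
  refine Finset.sum_congr rfl fun i _ => ?_
  rw [mul_comm, Complex.mul_conj]
  norm_cast
  simp [Complex.normSq_eq_norm_sq]

lemma nsq_eq_re {k : ℕ} (x : Fin k → ℂ) : nsq x = (cip x x).re := by
  rw [cip_self]; simp

lemma nsq_pos {k : ℕ} {x : Fin k → ℂ} (hx : x ≠ 0) : 0 < nsq x := by
  obtain ⟨i, hi⟩ := Function.ne_iff.mp hx
  refine Finset.sum_pos' (fun j _ => by positivity) ⟨i, Finset.mem_univ i, ?_⟩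
  exact pow_pos (norm_pos_iff.mpr hi) 2

lemma cip_zero_left {k : ℕ} (y : Fin k → ℂ) : cip 0 y = 0 := by simp [cip]

lemma cip_herm {k : ℕ} {B : Matrix (Fin k) (Fin k) ℂ} (hB : Bᴴ = B) (x y : Fin k → ℂ) :
    cip (B.mulVec x) y = cip x (B.mulVec y) := by
  simp only [cip, Matrix.mulVec, dotProduct, map_sum, _root_.map_mul, Finset.sum_mul,
    Finset.mul_sum]
  rw [Finset.sum_comm]
  refine Finset.sum_congr rfl fun i _ => Finset.sum_congr rfl fun j _ => ?_
  have hb : B i j = conj (B j i) := by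
    conv_lhs => rw [← hB]
    simp [Matrix.conjTranspose_apply]
  rw [hb]
  ring

lemma proj_mulVec {k : ℕ} (u v : Fin k → ℂ) :
    (1 - vecMulVec u (star u)).mulVec v = v - cip u v • u := by
  funext i
  simp [Matrix.sub_mulVec, Matrix.mulVec, Matrix.vecMulVec_apply, dotProduct, cip,
    Finset.sum_mul, Finset.mul_sum, Matrix.one_apply]
  simp only [sub_mul]
  rw [Finset.sum_sub_distrib]
  congr 1
  · simp [ite_mul, Finset.sum_ite_eq]
  · exact Finset.sum_congr rfl fun j _ => by ring

lemma quad_lin_zero {A C : ℝ} (h : ∀ ε : ℝ, 0 ≤ ε * C + ε ^ 2 * A) : C = 0 := by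
  set d := |A| + 1 with hdd
  have hd0 : (0:ℝ) < d := by positivity
  have hd : (0:ℝ) < d⁻¹ := by positivity
  have hδ1 : d⁻¹ * d = 1 := inv_mul_cancel₀ (ne_of_gt hd0)
  have h1 := h (-C * d⁻¹)
  have key : -C * d⁻¹ * C + (-C * d⁻¹) ^ 2 * A = C ^ 2 * d⁻¹ * (d⁻¹ * A - 1) := by ring
  rw [key] at h1
  have hx : d⁻¹ * |A| + d⁻¹ = 1 := by rw [← hδ1, hdd]; ring
  have h2 : d⁻¹ * A - 1 ≤ -d⁻¹ := by
    have := mul_le_mul_of_nonneg_left (le_abs_self A) hd.le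
    linarith
  have h3 : 0 ≤ C ^ 2 * d⁻¹ := by positivity
  have h4 : C ^ 2 * d⁻¹ * (d⁻¹ * A - 1) ≤ C ^ 2 * d⁻¹ * (-d⁻¹) :=
    mul_le_mul_of_nonneg_left h2 h3
  have h5 : C ^ 2 * d⁻¹ * d⁻¹ ≤ 0 := by linarith
  by_contra hC
  have : 0 < C ^ 2 * d⁻¹ * d⁻¹ := by positivity
  linarith

lemma nsq_nonneg {k : ℕ} (x : Fin k → ℂ) : 0 ≤ nsq x :=
  Finset.sum_nonneg fun i _ => by positivity

theorem stmt4 {k : ℕ} (B : Matrix (Fin k) (Fin k) ℂ) (hB : Bᴴ = B)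
    (u t : Fin k → ℂ) (hu : nsq u = 1)
    (w : Fin k → ℂ) (hw : w = proj u t)
    (τ : ℂ) (hτ : τ ≠ 0)
    (s : Fin k → ℂ) (hs : s = u + τ • w)
    (hmin : ∀ a b : ℂ, a • u + b • w ≠ 0 → rq B s ≤ rq B (a • u + b • w))
    (J : Matrix (Fin k) (Fin k) ℂ)
    (hJ : J = (1 - vecMulVec u (star u)) * (B - ((rq B s : ℝ) : ℂ) • 1) *
      (1 - vecMulVec u (star u))) :
    cip (J.mulVec (u - s)) (u - s) = ((rq B u - rq B s : ℝ) : ℂ) := by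
  have huu : cip u u = 1 := by rw [cip_self, hu, Complex.ofReal_one]
  have huw : cip u w = 0 := by
    rw [hw]; unfold proj
    rw [cip_sub_right, cip_smul_right, huu, mul_one, sub_self]
  have hwu : cip w u = 0 := by rw [← cip_conj, huw, map_zero]
  set ρ : ℝ := rq B s with hρ
  have hsu : cip s u = 1 := by
    rw [hs, cip_add_left, cip_smul_left, huu, hwu, mul_zero, add_zero]
  have hus : cip u s = 1 := by rw [← cip_conj, hsu, RingHom.map_one]
  have hτν : (starRingEnd ℂ) τ * τ = (Complex.normSq τ : ℂ) := by
    rw [mul_comm, Complex.mul_conj]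
  have hsval : cip s s = ((1 + Complex.normSq τ * nsq w : ℝ) : ℂ) := by
    rw [hs, cip_add_left, cip_add_right, cip_add_right, cip_smul_left, cip_smul_right,
      cip_smul_left, cip_smul_right, huu, huw, hwu, cip_self]
    rw [mul_zero, mul_zero, add_zero, zero_add, ← mul_assoc, hτν]
    push_cast
    ring
  have hnss : nsq s = 1 + Complex.normSq τ * nsq w := by
    rw [nsq_eq_re, hsval, Complex.ofReal_re]
  have hspos : 0 < nsq s := by
    rw [hnss]
    nlinarith [Complex.normSq_nonneg τ, nsq_nonneg w]
  have hgs : (cip (B.mulVec s) s).re = ρ * nsq s := by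
    rw [hρ, rq]; field_simp
  -- real-value lemmas
  have realB : ∀ x : Fin k → ℂ, cip (B.mulVec x) x = (((cip (B.mulVec x) x).re : ℝ) : ℂ) := by
    intro x
    refine (Complex.conj_eq_iff_re.mp ?_).symm
    rw [cip_conj, ← cip_herm hB]
  -- nonnegativity of the shifted quadratic form on the span
  have gnn : ∀ a b : ℂ, 0 ≤ (cip (B.mulVec (a • u + b • w)) (a • u + b • w)).re
      - ρ * nsq (a • u + b • w) := by
    intro a b
    by_cases hx : a • u + b • w = 0
    · rw [hx]
      simp [Matrix.mulVec_zero, cip, nsq]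
    · have h := hmin a b hx
      rw [rq] at h
      have hp := nsq_pos hx
      have := (le_div_iff₀ hp).mp h
      linarith
  -- expansions along s + ε u
  have expand1 : ∀ ε : ℝ, (cip (B.mulVec (s + (ε : ℂ) • u)) (s + (ε : ℂ) • u)).re
      = (cip (B.mulVec s) s).re + 2 * ε * (cip (B.mulVec s) u).re
        + ε ^ 2 * (cip (B.mulVec u) u).re := by
    intro ε
    have hcross : cip (B.mulVec u) s = conj (cip (B.mulVec s) u) := by
      rw [cip_conj, ← cip_herm hB]
    rw [Matrix.mulVec_add, Matrix.mulVec_smul]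
    rw [cip_add_left, cip_add_right, cip_add_right, cip_smul_left, cip_smul_right,
      cip_smul_left, cip_smul_right, hcross, Complex.conj_ofReal]
    rw [realB s, realB u]
    simp [Complex.add_re, Complex.mul_re, Complex.ofReal_re, Complex.ofReal_im,
      Complex.conj_re, Complex.conj_im]
    ring
  have expand2 : ∀ ε : ℝ, nsq (s + (ε : ℂ) • u) = nsq s + 2 * ε + ε ^ 2 := by
    intro ε
    rw [nsq_eq_re]
    rw [cip_add_left, cip_add_right, cip_add_right, cip_smul_left, cip_smul_right,
      cip_smul_left, cip_smul_right, hsu, hus, huu, Complex.conj_ofReal, cip_self]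
    simp only [mul_one]
    norm_cast
    ring
  -- stationarity
  have key : (cip (B.mulVec s) u).re = ρ := by
    have hquad : ∀ ε : ℝ, 0 ≤ ε * (2 * ((cip (B.mulVec s) u).re - ρ))
        + ε ^ 2 * ((cip (B.mulVec u) u).re - ρ) := by
      intro ε
      have hxe : ((1 : ℂ) + (ε : ℂ)) • u + τ • w = s + (ε : ℂ) • u := by
        rw [hs]; module
      have h0 := gnn (1 + (ε : ℂ)) τ
      rw [hxe, expand1 ε, expand2 ε] at h0
      nlinarith [h0, hgs]
    have := quad_lin_zero hquad
    linarith
  -- names for the basic quantities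
  have hα : cip (B.mulVec u) u = (((cip (B.mulVec u) u).re : ℝ) : ℂ) := realB u
  have hβ : cip (B.mulVec w) w = (((cip (B.mulVec w) w).re : ℝ) : ℂ) := realB w
  set α : ℝ := (cip (B.mulVec u) u).re with hαd
  set β : ℝ := (cip (B.mulVec w) w).re with hβd
  set G : ℂ := cip (B.mulVec w) u with hGd
  have hG1 : cip (B.mulVec u) w = conj G := by
    rw [cip_herm hB, hGd, cip_conj]
  -- expansion of cip (B s) u
  have hBsu : cip (B.mulVec s) u = (α : ℂ) + conj τ * G := by
    rw [hs, Matrix.mulVec_add, Matrix.mulVec_smul, cip_add_left, cip_smul_left, hα, hGd]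
  have key2 : α + (conj τ * G).re = ρ := by
    rw [hBsu] at key
    simpa using key
  -- expansion of cip (B s) s
  have hBss : cip (B.mulVec s) s
      = (α : ℂ) + τ * conj G + conj τ * G + (Complex.normSq τ : ℂ) * (β : ℂ) := by
    rw [hs, Matrix.mulVec_add, Matrix.mulVec_smul, cip_add_left, cip_add_right, cip_add_right,
      cip_smul_left, cip_smul_right, cip_smul_left, cip_smul_right, hα, hG1, hGd, hβ,
      ← mul_assoc, hτν]
    ring
  have hXre : (cip (B.mulVec s) s).re = α + 2 * (conj τ * G).re + Complex.normSq τ * β := by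
    rw [hBss]
    simp [Complex.add_re, Complex.mul_re, Complex.ofReal_re, Complex.ofReal_im,
      Complex.conj_re, Complex.conj_im]
    ring
  -- the main real identity
  have hmain : Complex.normSq τ * (β - ρ * nsq w) = α - ρ := by
    have h1 : ρ * (1 + Complex.normSq τ * nsq w)
        = α + 2 * (conj τ * G).re + Complex.normSq τ * β := by
      rw [← hnss, ← hgs, hXre]
    linear_combination -h1 - 2 * key2
  -- computing the left-hand side
  have hums : u - s = (-τ) • w := by rw [hs]; module
  have hrqu : rq B u = α := by rw [rq, hu, div_one, hαd]
  have hmainC : (Complex.normSq τ : ℂ) * ((β : ℂ) - (ρ : ℂ) * ((nsq w : ℝ) : ℂ))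
      = (α : ℂ) - (ρ : ℂ) := by
    exact_mod_cast congrArg (fun x : ℝ => (x : ℂ)) hmain
  have hv1 : (1 - vecMulVec u (star u)) *ᵥ ((-τ : ℂ) • w) = (-τ : ℂ) • w := by
    rw [proj_mulVec, cip_smul_right, huw, mul_zero, zero_smul, sub_zero]
  have hv2 : (B - ((ρ : ℝ) : ℂ) • 1) *ᵥ ((-τ : ℂ) • w)
      = (-τ : ℂ) • (B *ᵥ w) - (((ρ : ℝ) : ℂ) * (-τ)) • w := by
    rw [Matrix.sub_mulVec, Matrix.mulVec_smul, Matrix.smul_mulVec, Matrix.one_mulVec,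
      smul_smul]
  rw [hJ, hums, ← Matrix.mulVec_mulVec, ← Matrix.mulVec_mulVec, hv1, hv2, proj_mulVec]
  simp only [cip_sub_left, cip_smul_left, cip_smul_right, huw, hwu, hβ, cip_self,
    map_neg, _root_.map_mul, Complex.conj_ofReal, mul_zero, zero_mul, sub_zero, neg_zero,
    neg_mul, neg_neg]
  rw [hrqu]
  push_cast
  linear_combination ((β : ℂ) - (ρ : ℂ) * ((nsq w : ℝ) : ℂ)) * hτν + hmainC
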